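/- Let (X_k)_{k∈ℕ} be a nonnegative, integrable stochastic process adapted to a filtration (F_k)_{k∈ℕ} on a probability space (Ω, F, P), and let ψ ≥ 0 be a constant such that E[X_{k+1} | F_k] ≤ X_k + ψ almost surely for every k. Let 0 < η < δ and suppose X₀ ≤ η almost surely, and let T ∈ ℕ. Then P( ∃ k ∈ {0, 1, …, T} : X_k ≥ δ ) ≤ (η + ψ T)/δ. -/

import Mathlib

open MeasureTheory

/-- **(Statement 8)** Finite-horizon safety bound with relaxation (`κ = 1`): if
`E[X_{k+1} | F_k] ≤ X_k + ψ` then the probability of reaching level `δ` within time `T`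
is at most `(η + ψ T)/δ`. -/
theorem finite_horizon_safety_bound_relaxed
    {Ω : Type*} {m0 : MeasurableSpace Ω} {P : Measure Ω} [IsProbabilityMeasure P]
    (ℱ : Filtration ℕ m0) (X : ℕ → Ω → ℝ)
    (hadapted : Adapted ℱ X)
    (hnonneg : ∀ k, ∀ᵐ ω ∂P, 0 ≤ X k ω)
    (hint : ∀ k, Integrable (X k) P)
    (ψ : ℝ) (hψ : 0 ≤ ψ)
    (hdrift : ∀ k, ∀ᵐ ω ∂P, (P[X (k + 1)|ℱ k]) ω ≤ X k ω + ψ)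
    (η δ : ℝ) (hη : 0 < η) (hηδ : η < δ)
    (hX0 : ∀ᵐ ω ∂P, X 0 ω ≤ η) (T : ℕ) :
    (P {ω | ∃ k ≤ T, δ ≤ X k ω}).toReal ≤ (η + ψ * T) / δ := by
  classical
  have hδ : (0:ℝ) < δ := lt_trans hη hηδ
  -- the compensated process `g k = X k - ψ k` is a supermartingale
  set g : ℕ → Ω → ℝ := fun k ω => X k ω - ψ * k with hg_def
  have hg_adp : Adapted ℱ g := fun k => (hadapted k).sub measurable_const
  have hg_int : ∀ k, Integrable (g k) P := fun k => (hint k).sub (integrable_const _)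
  have hg : Supermartingale g ℱ P := by
    refine supermartingale_nat hg_adp.stronglyAdapted hg_int fun k => ?_
    have h1 : P[g (k+1)|ℱ k] =ᵐ[P]
        P[X (k+1)|ℱ k] - P[(fun _ => ψ * ((k:ℝ)+1))|ℱ k] := by
      have : g (k+1) = X (k+1) - fun _ => ψ * ((k:ℝ)+1) := by
        funext ω; simp only [hg_def, Pi.sub_apply]; push_cast; ring
      rw [this]
      exact condExp_sub (hint (k+1)) (integrable_const _) _
    have hc : (P[(fun _ : Ω => ψ * ((k:ℝ)+1))|ℱ k]) = fun _ => ψ * ((k:ℝ)+1) :=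
      condExp_const (ℱ.le k) _
    rw [hc] at h1
    filter_upwards [h1, hdrift k] with ω h1 h2
    show (P[g (k+1)|ℱ k]) ω ≤ X k ω - ψ * k
    simp only [Pi.sub_apply] at h1
    rw [h1]
    linarith
  -- the hitting time of level δ
  set τ : Ω → WithTop ℕ := fun ω => (hittingBtwn X {y : ℝ | δ ≤ y} 0 T ω : ℕ) with hτ_def
  have hmeasS : MeasurableSet {y : ℝ | δ ≤ y} := measurableSet_Ici
  have hτ : IsStoppingTime ℱ τ := hadapted.isStoppingTime_hittingBtwn hmeasS
  have hτ_le : ∀ ω, τ ω ≤ T := fun ω => WithTop.coe_le_coe.2 (hittingBtwn_le ω)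
  -- integrability of stopped values
  have hXτ_int : Integrable (stoppedValue X τ) P :=
    integrable_stoppedValue ℕ hτ hint hτ_le
  have hgτ_int : Integrable (stoppedValue g τ) P :=
    integrable_stoppedValue ℕ hτ hg_int hτ_le
  -- optional stopping: E[stoppedValue g τ] ≤ E[g 0] = E[X 0] ≤ η
  have hOS : ∫ ω, stoppedValue g τ ω ∂P ≤ ∫ ω, g 0 ω ∂P := by
    have h := hg.neg.expected_stoppedValue_mono (isStoppingTime_const ℱ 0) hτ
      (fun ω => WithTop.coe_le_coe.2 (Nat.zero_le _)) hτ_le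
    have e1 : stoppedValue (-g) (fun _ => (WithTop.some (0:ℕ) : WithTop ℕ)) = -(g 0) := by
      funext ω; simp [stoppedValue]
    have e2 : stoppedValue (-g) τ = -(stoppedValue g τ) := by
      funext ω; simp [stoppedValue]
    rw [e1, e2] at h
    simp only [Pi.neg_apply, integral_neg, neg_le_neg_iff] at h
    exact h
  have hg0 : ∫ ω, g 0 ω ∂P ≤ η := by
    have : ∫ ω, g 0 ω ∂P = ∫ ω, X 0 ω ∂P := by
      apply integral_congr_ae
      filter_upwards with ω
      simp [hg_def]
    rw [this]
    calc ∫ ω, X 0 ω ∂P ≤ ∫ _, η ∂P := integral_mono_ae (hint 0) (integrable_const η) hX0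
    _ = η := by simp
  -- E[stoppedValue X τ] ≤ η + ψ T
  have hkey : ∫ ω, stoppedValue X τ ω ∂P ≤ η + ψ * T := by
    have hle : ∀ ω, stoppedValue X τ ω ≤ stoppedValue g τ ω + ψ * T := by
      intro ω
      have : stoppedValue g τ ω = stoppedValue X τ ω - ψ * (τ ω).untopA := rfl
      have hb : ψ * ((τ ω).untopA : ℝ) ≤ ψ * T :=
        mul_le_mul_of_nonneg_left (Nat.cast_le.2 (hittingBtwn_le ω)) hψ
      linarith
    calc ∫ ω, stoppedValue X τ ω ∂P
        ≤ ∫ ω, (stoppedValue g τ ω + ψ * T) ∂P :=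
          integral_mono hXτ_int (hgτ_int.add (integrable_const _)) hle
      _ = (∫ ω, stoppedValue g τ ω ∂P) + ψ * T := by
          rw [integral_add hgτ_int (integrable_const _)]; simp
      _ ≤ η + ψ * T := by linarith
  -- the event is measurable
  set A : Set Ω := {ω | ∃ k ≤ T, δ ≤ X k ω} with hA_def
  have hA_meas : MeasurableSet A := by
    have : A = ⋃ k ∈ Set.Iic T, {ω | δ ≤ X k ω} := by
      ext ω; simp [hA_def]
    rw [this]
    exact MeasurableSet.biUnion (Set.to_countable _) fun k _ =>
      measurableSet_le measurable_const ((hadapted k).mono (ℱ.le k) le_rfl)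
  -- δ · P(A) ≤ E[stoppedValue X τ]
  have hlow : δ * (P A).toReal ≤ ∫ ω, stoppedValue X τ ω ∂P := by
    have h1 : ∀ ω ∈ A, δ ≤ stoppedValue X τ ω := by
      rintro ω ⟨k, hk, hδk⟩
      exact stoppedValue_hittingBtwn_mem ⟨k, ⟨Nat.zero_le _, hk⟩, hδk⟩
    have h2 : δ * (P A).toReal ≤ ∫ ω in A, stoppedValue X τ ω ∂P :=
      by have := setIntegral_ge_of_const_le hA_meas (measure_ne_top P A) h1 hXτ_int.integrableOn
         rw [smul_eq_mul, mul_comm] at this; exact this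
    have h3 : ∫ ω in A, stoppedValue X τ ω ∂P ≤ ∫ ω, stoppedValue X τ ω ∂P := by
      refine setIntegral_le_integral hXτ_int ?_
      have := ae_all_iff.2 hnonneg
      filter_upwards [this] with ω hω
      exact hω (τ ω).untopA
    linarith
  rw [le_div_iff₀ hδ]
  nlinarith [ENNReal.toReal_nonneg (a := P A)]
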